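/- arXiv:1408.1621 — 3 statements merged into one kernel-verified Lean document; each statement's English description precedes it below -/
import Mathlib

section
/- Let (M,g,f) be an m-quasi-Einstein manifold with λ ≤ 0 and fiber constant μ, where m > 1 and u = e^{-f/m}. If the scalar curvature satisfies R ≥ λn, then (m−1)|∇u|² ≤ −λu² + μ pointwise on M. -/
/-- On an m-quasi-Einstein manifold with λ ≤ 0, m > 1 and R ≥ λn,
one has (m−1)|∇u|² ≤ −λu² + μ pointwise, where u = e^{-f/m}. -/
theorem quasiEinstein_gradient_inequality {M : Type*}
    (n : ℕ) (m lam mu : ℝ) (hm : 1 < m) (hlam : lam ≤ 0)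
    (f u R Δf gradf2 gradu2 : M → ℝ)
    (hu : ∀ x, u x = Real.exp (-f x / m))
    (htrace : ∀ x, R x + Δf x - (1 / m) * gradf2 x = lam * n)
    (hfiber : ∀ x, Δf x - gradf2 x = m * lam - m * mu * Real.exp (2 * f x / m))
    (hgradu : ∀ x, gradu2 x = (u x) ^ 2 / m ^ 2 * gradf2 x)
    (hgradf2 : ∀ x, 0 ≤ gradf2 x)
    (hR : ∀ x, lam * n ≤ R x) :
    ∀ x, (m - 1) * gradu2 x ≤ -lam * (u x) ^ 2 + mu := by
  intro x
  have hm0 : (0:ℝ) < m := lt_trans one_pos hm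
  -- Δf x ≤ (1/m) gradf2 x
  have h1 : Δf x ≤ (1 / m) * gradf2 x := by
    have := htrace x
    have := hR x
    linarith
  -- (1 - 1/m) gradf2 ≤ -m lam + m mu E, where E = exp(2f/m)
  set E := Real.exp (2 * f x / m) with hE
  have h2 : (1 - 1 / m) * gradf2 x ≤ -(m * lam) + m * mu * E := by
    have := hfiber x
    linarith [h1]
  -- u^2 * E = 1
  have hu2E : (u x) ^ 2 * E = 1 := by
    rw [hu x, hE, ← Real.exp_nat_mul]
    rw [← Real.exp_add, ← Real.exp_zero]
    congr 1
    field_simp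
    norm_num
  have hu2 : (0:ℝ) ≤ (u x) ^ 2 := sq_nonneg _
  -- multiply h2 by u^2/m ≥ 0
  have h3 : (u x) ^ 2 / m * ((1 - 1 / m) * gradf2 x)
      ≤ (u x) ^ 2 / m * (-(m * lam) + m * mu * E) := by
    apply mul_le_mul_of_nonneg_left h2 (by positivity)
  calc (m - 1) * gradu2 x
      = (u x) ^ 2 / m * ((1 - 1 / m) * gradf2 x) := by
        rw [hgradu x]; field_simp
    _ ≤ (u x) ^ 2 / m * (-(m * lam) + m * mu * E) := h3
    _ = -lam * (u x) ^ 2 + mu * ((u x) ^ 2 * E) := by field_simp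
    _ = -lam * (u x) ^ 2 + mu := by rw [hu2E, mul_one]
end

section
/- Let (M,g,f) be a steady m-quasi-Einstein manifold (λ = 0) with m > 1, fiber constant μ > 0, and assume the scalar curvature satisfies R ≥ 0. Then the gradient of u = e^{-f/m} satisfies the uniform bound |∇u|² ≤ μ/(m−1) on all of M. -/
/-- On a steady (λ = 0) m-quasi-Einstein manifold with m > 1, fiber constant
μ > 0 and R ≥ 0, the gradient of u = e^{-f/m} satisfies |∇u|² ≤ μ/(m−1). -/
theorem steady_quasiEinstein_gradient_bound {M : Type*}
    (n : ℕ) (m mu : ℝ) (hm : 1 < m) (hmu : 0 < mu)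
    (f u R Δf gradf2 gradu2 : M → ℝ)
    (hu : ∀ x, u x = Real.exp (-f x / m))
    (htrace : ∀ x, R x + Δf x - (1 / m) * gradf2 x = 0)
    (hfiber : ∀ x, Δf x - gradf2 x = -(m * mu * Real.exp (2 * f x / m)))
    (hgradu : ∀ x, gradu2 x = (u x) ^ 2 / m ^ 2 * gradf2 x)
    (hgradf2 : ∀ x, 0 ≤ gradf2 x)
    (hR : ∀ x, 0 ≤ R x) :
    ∀ x, gradu2 x ≤ mu / (m - 1) := by
  intro x
  have hm0 : (0:ℝ) < m := by linarith
  have hE : u x ^ 2 * Real.exp (2 * f x / m) = 1 := by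
    rw [hu, ← Real.exp_nat_mul, ← Real.exp_add]
    rw [show (2:ℕ) * (-f x / m) + 2 * f x / m = 0 by push_cast; field_simp; ring]
    exact Real.exp_zero
  have h1 := htrace x
  have h2 := hfiber x
  -- (1 - 1/m) * gradf2 x = m*mu*E - R x ≤ m*mu*E
  have key : (1 - 1/m) * gradf2 x ≤ m * mu * Real.exp (2 * f x / m) := by
    nlinarith [hR x]
  rw [hgradu x]
  have hEpos : 0 < Real.exp (2 * f x / m) := Real.exp_pos _
  have hu2 : (0:ℝ) < u x ^ 2 := by rw [hu]; positivity
  rw [div_mul_eq_mul_div, div_le_div_iff₀ (by positivity) (by linarith)]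
  have hgoal : u x ^ 2 * gradf2 x * (m - 1) ≤ m ^ 2 * (u x ^ 2 * (m * mu * Real.exp (2 * f x / m))) / m := by
    have : u x ^ 2 * ((1 - 1/m) * gradf2 x) ≤ u x ^ 2 * (m * mu * Real.exp (2 * f x / m)) :=
      mul_le_mul_of_nonneg_left key (le_of_lt hu2)
    calc u x ^ 2 * gradf2 x * (m - 1)
        = m * (u x ^ 2 * ((1 - 1/m) * gradf2 x)) := by field_simp
      _ ≤ m * (u x ^ 2 * (m * mu * Real.exp (2 * f x / m))) := by nlinarith
      _ = m ^ 2 * (u x ^ 2 * (m * mu * Real.exp (2 * f x / m))) / m := by field_simp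
  calc u x ^ 2 * gradf2 x * (m - 1) ≤ _ := hgoal
    _ = mu * m ^ 2 := by rw [show u x ^ 2 * (m * mu * Real.exp (2 * f x / m)) = m * mu * (u x ^ 2 * Real.exp (2 * f x / m)) by ring, hE]; field_simp
end

section
/- Let (M,g,f) be an expanding m-quasi-Einstein manifold (λ < 0) with m > 1 and fiber constant μ ≤ 0, and suppose f ≥ −k for some constant k > 0 and R ≥ λn. Then |∇u|² ≤ −λ e^{2k/m}/(m−1), where u = e^{-f/m}. -/
/-- On an expanding (λ < 0) m-quasi-Einstein manifold with m > 1, μ ≤ 0,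
f ≥ −k (k > 0) and R ≥ λn, one has |∇u|² ≤ −λe^{2k/m}/(m−1) for u = e^{-f/m}. -/
theorem expanding_quasiEinstein_gradient_bound {M : Type*}
    (n : ℕ) (m lam mu k : ℝ) (hm : 1 < m) (hlam : lam < 0) (hmu : mu ≤ 0)
    (hk : 0 < k)
    (f u R Δf gradf2 gradu2 : M → ℝ)
    (hf : ∀ x, -k ≤ f x)
    (hu : ∀ x, u x = Real.exp (-f x / m))
    (htrace : ∀ x, R x + Δf x - (1 / m) * gradf2 x = lam * n)
    (hfiber : ∀ x, Δf x - gradf2 x = m * lam - m * mu * Real.exp (2 * f x / m))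
    (hgradu : ∀ x, gradu2 x = (u x) ^ 2 / m ^ 2 * gradf2 x)
    (hgradf2 : ∀ x, 0 ≤ gradf2 x)
    (hR : ∀ x, lam * n ≤ R x) :
    ∀ x, gradu2 x ≤ -lam * Real.exp (2 * k / m) / (m - 1) := by
  intro x
  have hm0 : (0:ℝ) < m := by linarith
  set E := Real.exp (2 * f x / m) with hE
  set U := u x with hU
  have hEpos : 0 < E := Real.exp_pos _
  have hUpos : 0 < U := by rw [hU, hu x]; exact Real.exp_pos _
  -- U^2 * E = 1
  have hUE : U ^ 2 * E = 1 := by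
    rw [hU, hu x, hE, sq, ← Real.exp_add, ← Real.exp_add, ← Real.exp_zero]
    congr 1
    field_simp
    ring
  -- U^2 ≤ exp(2k/m)
  have hU2 : U ^ 2 ≤ Real.exp (2 * k / m) := by
    have h1 : U ≤ Real.exp (k / m) := by
      rw [hU, hu x]
      apply Real.exp_le_exp.2
      have := hf x
      rw [div_le_div_iff₀ hm0 hm0]
      nlinarith
    have h2 : U ^ 2 ≤ Real.exp (k / m) ^ 2 := by nlinarith
    calc U ^ 2 ≤ Real.exp (k / m) ^ 2 := h2
      _ = Real.exp (2 * k / m) := by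
          rw [sq, ← Real.exp_add]; congr 1; ring
  -- (1 - 1/m) * gradf2 x ≤ -m*lam + m*mu*E
  have hg : (1 - 1 / m) * gradf2 x ≤ -(m * lam) + m * mu * E := by
    have h1 := htrace x
    have h2 := hfiber x
    have h3 := hR x
    rw [← hE] at h2
    linarith
  -- main estimate
  have hexp2k : 0 < Real.exp (2 * k / m) := Real.exp_pos _
  rw [hgradu x, ← hU]
  rw [div_mul_eq_mul_div,
    div_le_div_iff₀ (by positivity : (0:ℝ) < m ^ 2) (by linarith : (0:ℝ) < m - 1)]
  have hg' : (m - 1) * gradf2 x ≤ m * (-(m * lam) + m * mu * E) := by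
    have h := mul_le_mul_of_nonneg_left hg hm0.le
    have : m * ((1 - 1 / m) * gradf2 x) = (m - 1) * gradf2 x := by field_simp
    linarith [this ▸ h]
  have hmu' : m * mu * E * U ^ 2 = m * mu := by
    have h : m * mu * E * U ^ 2 = m * mu * (U ^ 2 * E) := by ring
    rw [h, hUE, mul_one]
  nlinarith [mul_le_mul_of_nonneg_left hg' (sq_nonneg U), hmu',
    mul_le_mul_of_nonneg_left hU2 (by nlinarith : (0:ℝ) ≤ m ^ 2 * (-lam))]
end
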